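/- Let z₀ ∈ (0,1) ⊂ ℝ, t > 0 and r = e^t. Then the Hilbert circle {z = x + iy ∈ 𝔹² : h(z₀, z) = t} is exactly the Euclidean ellipse given by (((r+1)² − (r−1)²z₀²)x − 4rz₀)² / ((r²−1)²(1−z₀²)²) + ((r+1)² − (r−1)²z₀²)y² / ((r−1)²(1−z₀²)) = 1; its semi-minor axis equals (r²−1)(1−z₀²) / ((r+1)² − (r−1)²z₀²) and its semi-major axis equals (r−1)√(1−z₀²) / √((r+1)² − (r−1)²z₀²). -/

import Mathlib

open Complex ComplexConjugate

/-- The line through two points `a`, `b` in the complex plane. -/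
noncomputable def lineThrough (a b : ℂ) : Set ℂ :=
  {z : ℂ | ∃ t : ℝ, z = a + (t : ℂ) * (b - a)}

/-- The Hilbert metric of the unit disk: for `a ≠ b`,
`h(a,b) = log (|u-b||a-v| / (|u-a||b-v|))` where `u, v` are the intersection
points of the line through `a, b` with the unit circle, ordered so that
`|u-a| < |u-b|` (equivalently `|v-b| < |v-a|`). For `a = b` the defining set
is empty and `sSup ∅ = 0`. -/
noncomputable def hilbertDist (a b : ℂ) : ℝ :=
  sSup { d : ℝ | ∃ u v : ℂ, ‖u‖ = 1 ∧ ‖v‖ = 1 ∧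
    u ∈ lineThrough a b ∧ v ∈ lineThrough a b ∧
    dist u a < dist u b ∧ dist v b < dist v a ∧
    d = Real.log ((dist u b * dist a v) / (dist u a * dist b v)) }

/-- The hyperbolic (Poincaré) metric of the unit disk, defined by
`sinh (ρ(a,b)/2) = |a-b| / √((1-|a|²)(1-|b|²))`. -/
noncomputable def rhoDist (a b : ℂ) : ℝ :=
  2 * Real.arsinh (‖a - b‖ /
    Real.sqrt ((1 - ‖a‖ ^ 2) * (1 - ‖b‖ ^ 2)))

/-- The visual angle metric of the unit disk:
`v(a,b) = sup {∠(a,z,b) : z ∈ ∂𝔹²}`. -/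
noncomputable def visualAngle (a b : ℂ) : ℝ :=
  sSup { α : ℝ | ∃ z : ℂ, ‖z‖ = 1 ∧ α = EuclideanGeometry.angle a z b }

/-- Euclidean distance from the origin to the line through `a` and `b`. -/
noncomputable def distToLine (a b : ℂ) : ℝ := Metric.infDist 0 (lineThrough a b)

/-- The Hilbert disk `B_h(z₀, t)`. -/
noncomputable def hilbertBall (z₀ : ℂ) (t : ℝ) : Set ℂ :=
  {z : ℂ | ‖z‖ < 1 ∧ hilbertDist z₀ z < t}

/-- The hyperbolic disk `B_ρ(z₀, t)`. -/
noncomputable def rhoBall (z₀ : ℂ) (t : ℝ) : Set ℂ :=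
  {z : ℂ | ‖z‖ < 1 ∧ rhoDist z₀ z < t}

lemma normSq_line (a w : ℂ) (s : ℝ) :
    Complex.normSq (a + (s : ℂ) * w) =
      Complex.normSq w * (s * s) + (2 * (a * conj w).re) * s + Complex.normSq a := by
  simp only [Complex.normSq_apply, Complex.add_re, Complex.add_im, Complex.mul_re,
    Complex.mul_im, Complex.conj_re, Complex.conj_im, Complex.ofReal_re, Complex.ofReal_im]
  ring

lemma hilbertDist_self (a : ℂ) : hilbertDist a a = 0 := by
  unfold hilbertDist
  have : { d : ℝ | ∃ u v : ℂ, ‖u‖ = 1 ∧ ‖v‖ = 1 ∧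
    u ∈ lineThrough a a ∧ v ∈ lineThrough a a ∧
    dist u a < dist u a ∧ dist v a < dist v a ∧
    d = Real.log ((dist u a * dist a v) / (dist u a * dist a v)) } = ∅ := by
    ext d
    simp only [Set.mem_setOf_eq, Set.mem_empty_iff_false, iff_false]
    rintro ⟨u, v, _, _, _, _, h, _, _⟩
    exact absurd h (lt_irrefl _)
  rw [this, Real.sSup_empty]

set_option maxHeartbeats 1000000 in
lemma hilbertDist_formula (a b : ℂ) (α β γ s tm tp : ℝ)
    (hα : α = Complex.normSq (b - a)) (hβ : β = 2 * (a * conj (b - a)).re)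
    (hγ : γ = Complex.normSq a - 1)
    (hs : s = Real.sqrt (β ^ 2 - 4 * α * γ))
    (htm : tm = (-β - s) / (2 * α)) (htp : tp = (-β + s) / (2 * α))
    (ha : ‖a‖ < 1) (hb : ‖b‖ < 1) (hab : a ≠ b) :
    hilbertDist a b = Real.log (((1 - tm) * tp) / ((-tm) * (tp - 1))) ∧ tm < 0 ∧ 1 < tp := by
  have hw : b - a ≠ 0 := sub_ne_zero.mpr (Ne.symm hab)
  have hα0 : 0 < α := hα ▸ Complex.normSq_pos.mpr hw
  have hγ0 : γ < 0 := by
    rw [hγ, ← Complex.sq_norm]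
    nlinarith [norm_nonneg a]
  have hfb : α + β + γ = Complex.normSq b - 1 := by
    have := normSq_line a (b - a) 1
    push_cast at this
    simp only [one_mul] at this
    rw [hα, hβ, hγ]
    rw [show a + (b - a) = b by ring] at this
    linarith
  have hb0 : α + β + γ < 0 := by
    rw [hfb, ← Complex.sq_norm]
    nlinarith [norm_nonneg b]
  have hD : 0 < β ^ 2 - 4 * α * γ := by nlinarith
  have hs0 : 0 < s := hs ▸ Real.sqrt_pos.mpr hD
  have hss : s * s = β ^ 2 - 4 * α * γ := by
    rw [hs]; exact Real.mul_self_sqrt hD.le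
  have hq : ∀ u : ℝ, Complex.normSq (a + (u : ℂ) * (b - a)) = α * (u * u) + β * u + γ + 1 := by
    intro u; rw [normSq_line, ← hα, ← hβ, hγ]; ring
  have h2 : ∀ u : ℝ, α * (u * u) + β * u + γ = 0 ↔ u = tp ∨ u = tm := by
    intro u
    rw [htp, htm]
    exact quadratic_eq_zero_iff hα0.ne' (by rw [discrim]; linarith [hss]) u
  have hroot : ∀ u : ℝ, ‖a + (u : ℂ) * (b - a)‖ = 1 ↔ u = tp ∨ u = tm := by
    intro u
    rw [← h2 u]
    constructor
    · intro h
      have h' : Complex.normSq (a + (u : ℂ) * (b - a)) = 1 := by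
        rw [← Complex.sq_norm, h]; norm_num
      rw [hq u] at h'; linarith
    · intro h
      have h' : Complex.normSq (a + (u : ℂ) * (b - a)) = 1 := by rw [hq u]; linarith
      rw [Complex.norm_def, h', Real.sqrt_one]
  have hprod : tm * tp = γ / α := by
    rw [htm, htp]
    field_simp
    nlinarith [hss]
  have hsum : tm + tp = -β / α := by
    rw [htm, htp]; field_simp; ring
  have hle : tm < tp := by
    rw [htm, htp, div_lt_div_iff₀ (by positivity) (by positivity)]
    nlinarith
  have htm0 : tm < 0 := by
    have : tm * tp < 0 := by rw [hprod]; exact div_neg_of_neg_of_pos hγ0 hα0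
    nlinarith
  have htp0 : 0 < tp := by nlinarith [hprod, div_neg_of_neg_of_pos hγ0 hα0]
  have htp1 : 1 < tp := by
    have h1 : α * ((1 - tm) * (1 - tp)) = α + β + γ := by
      have e1 : α * (tm * tp) = γ := by
        rw [hprod]; field_simp
      have e2 : α * (tm + tp) = -β := by
        rw [hsum]; field_simp
      linear_combination e1 - e2
    have : (1 - tm) * (1 - tp) < 0 := by
      by_contra hcon
      push_neg at hcon
      nlinarith
    nlinarith
  refine ⟨?_, htm0, htp1⟩
  -- distance computations
  have hdist : ∀ u : ℝ, dist (a + (u : ℂ) * (b - a)) a = |u| * ‖b - a‖ ∧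
      dist (a + (u : ℂ) * (b - a)) b = |u - 1| * ‖b - a‖ := by
    intro u
    constructor
    · rw [Complex.dist_eq, show a + (u : ℂ) * (b - a) - a = (u : ℂ) * (b - a) by ring,
        norm_mul, Complex.norm_real, Real.norm_eq_abs]
    · rw [Complex.dist_eq,
        show a + (u : ℂ) * (b - a) - b = (((u - 1 : ℝ)) : ℂ) * (b - a) by push_cast; ring,
        norm_mul, Complex.norm_real, Real.norm_eq_abs]
  have hwpos : 0 < ‖b - a‖ := by
    simpa using norm_pos_iff.mpr hw
  set W := ‖b - a‖ with hW
  have hset : { d : ℝ | ∃ u v : ℂ, ‖u‖ = 1 ∧ ‖v‖ = 1 ∧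
      u ∈ lineThrough a b ∧ v ∈ lineThrough a b ∧
      dist u a < dist u b ∧ dist v b < dist v a ∧
      d = Real.log ((dist u b * dist a v) / (dist u a * dist b v)) } =
      {Real.log (((1 - tm) * tp) / ((-tm) * (tp - 1)))} := by
    ext d
    simp only [Set.mem_setOf_eq, Set.mem_singleton_iff]
    constructor
    · rintro ⟨u, v, hu1, hv1, ⟨su, hsu⟩, ⟨sv, hsv⟩, hor1, hor2, hd⟩
      subst hsu hsv
      have hsu' : su = tp ∨ su = tm := (hroot su).mp hu1
      have hsv' : sv = tp ∨ sv = tm := (hroot sv).mp hv1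
      obtain ⟨hda, hdb⟩ := hdist su
      obtain ⟨hda', hdb'⟩ := hdist sv
      have hsu2 : su = tm := by
        rcases hsu' with h | h
        · exfalso
          rw [hda, hdb, h, abs_of_pos (by linarith : (0:ℝ) < tp),
            abs_of_pos (by linarith : (0:ℝ) < tp - 1)] at hor1
          have := (mul_lt_mul_iff_of_pos_right hwpos).mp hor1
          linarith
        · exact h
      have hsv2 : sv = tp := by
        rcases hsv' with h | h
        · exact h
        · exfalso
          rw [hda', hdb', h, abs_of_neg (by linarith : tm - 1 < 0),
            abs_of_neg (by linarith : tm < 0)] at hor2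
          have := (mul_lt_mul_iff_of_pos_right hwpos).mp hor2
          linarith
      rw [hd, hdb, dist_comm a _, hda', hda, dist_comm b _, hdb', hsu2, hsv2]
      congr 1
      rw [abs_of_neg (by linarith : tm - 1 < 0), abs_of_neg htm0,
        abs_of_pos htp0, abs_of_pos (by linarith : (0:ℝ) < tp - 1)]
      rw [show -(tm - 1) * W * (tp * W) = ((1 - tm) * tp) * (W * W) by ring,
        show -tm * W * ((tp - 1) * W) = ((-tm) * (tp - 1)) * (W * W) by ring,
        mul_div_mul_comm, div_self (by positivity : (W * W : ℝ) ≠ 0), mul_one]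
    · intro hd
      refine ⟨a + (tm : ℂ) * (b - a), a + (tp : ℂ) * (b - a),
        (hroot tm).mpr (Or.inr rfl), (hroot tp).mpr (Or.inl rfl),
        ⟨tm, rfl⟩, ⟨tp, rfl⟩, ?_, ?_, ?_⟩
      · obtain ⟨hda, hdb⟩ := hdist tm
        rw [hda, hdb, abs_of_neg htm0, abs_of_neg (by linarith : tm - 1 < 0)]
        have : -tm < -(tm - 1) := by linarith
        exact mul_lt_mul_of_pos_right this hwpos
      · obtain ⟨hda, hdb⟩ := hdist tp
        rw [hda, hdb, abs_of_pos htp0, abs_of_pos (by linarith : (0:ℝ) < tp - 1)]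
        have : tp - 1 < tp := by linarith
        exact mul_lt_mul_of_pos_right this hwpos
      · obtain ⟨hda, hdb⟩ := hdist tm
        obtain ⟨hda', hdb'⟩ := hdist tp
        rw [hd, hdb, dist_comm a _, hda', hda, dist_comm b _, hdb']
        congr 1
        rw [abs_of_neg (by linarith : tm - 1 < 0), abs_of_neg htm0,
          abs_of_pos htp0, abs_of_pos (by linarith : (0:ℝ) < tp - 1)]
        conv_rhs => rw [show -(tm - 1) * W * (tp * W) = ((1 - tm) * tp) * (W * W) by ring,
          show -tm * W * ((tp - 1) * W) = ((-tm) * (tp - 1)) * (W * W) by ring,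
          mul_div_mul_comm, div_self (by positivity : (W * W : ℝ) ≠ 0), mul_one]
  rw [hilbertDist, hset, csSup_singleton]
lemma alg1 (α β γ s r : ℝ) (hα : 0 < α) (hss : s * s = β ^ 2 - 4 * α * γ)
    (e : (1 - (-β - s) / (2 * α)) * ((-β + s) / (2 * α)) =
      r * ((-((-β - s) / (2 * α))) * ((-β + s) / (2 * α) - 1))) :
    (1 + r) * s = (1 - r) * (β + 2 * γ) := by
  have h2 : (2 * α) ≠ 0 := by positivity
  field_simp at e
  have hk2 : (2 * α) * ((1 + r) * s) = (2 * α) * ((1 - r) * (β + 2 * γ)) := by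
    linear_combination e - (1 - r) * hss
  exact mul_left_cancel₀ h2 hk2

lemma alg2 (α β γ s r : ℝ) (hα : 0 < α) (hss : s * s = β ^ 2 - 4 * α * γ)
    (hk : (1 + r) * s = (1 - r) * (β + 2 * γ)) :
    (1 - (-β - s) / (2 * α)) * ((-β + s) / (2 * α)) =
      r * ((-((-β - s) / (2 * α))) * ((-β + s) / (2 * α) - 1)) := by
  have h2 : (2 * α) ≠ 0 := by positivity
  field_simp
  linear_combination (2 * α) * hk + hss - r * hss

set_option maxHeartbeats 1000000 in
lemma main_char (z₀ : ℝ) (h₁ : 0 < z₀) (h₂ : z₀ < 1) (t : ℝ) (ht : 0 < t)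
    (r : ℝ) (hr : r = Real.exp t) :
    {z : ℂ | ‖z‖ < 1 ∧ hilbertDist (z₀ : ℂ) z = t} =
    {z : ℂ | (1 + r) ^ 2 * ((z.re - z₀) ^ 2 + (1 - z₀ ^ 2) * z.im ^ 2) =
      (r - 1) ^ 2 * (1 - z₀ * z.re) ^ 2} := by
  have hr1 : 1 < r := by
    rw [hr, show (1:ℝ) = Real.exp 0 from Real.exp_zero.symm]
    exact Real.exp_lt_exp.mpr ht
  have h1z : 0 < 1 - z₀ ^ 2 := by nlinarith
  have habs : ‖(z₀ : ℂ)‖ < 1 := by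
    rwa [Complex.norm_real, Real.norm_eq_abs, abs_of_pos h₁]
  ext z
  simp only [Set.mem_setOf_eq]
  have hαpf : (z.re - z₀) ^ 2 + z.im ^ 2 = Complex.normSq (z - (z₀ : ℂ)) := by
    simp only [Complex.normSq_apply, Complex.sub_re, Complex.sub_im, Complex.ofReal_re,
      Complex.ofReal_im]
    ring
  have hβpf : 2 * (z₀ * (z.re - z₀)) = 2 * (((z₀ : ℂ)) * conj (z - (z₀ : ℂ))).re := by
    simp only [Complex.mul_re, Complex.conj_re, Complex.conj_im, Complex.sub_re,
      Complex.sub_im, Complex.ofReal_re, Complex.ofReal_im]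
    ring
  have hγpf : z₀ ^ 2 - 1 = Complex.normSq (z₀ : ℂ) - 1 := by
    rw [Complex.normSq_ofReal]; ring
  constructor
  · rintro ⟨hz1, hd⟩
    have hne : (z₀ : ℂ) ≠ z := by
      intro h
      rw [← h, hilbertDist_self] at hd
      linarith
    set A : ℝ := (z.re - z₀) ^ 2 + z.im ^ 2 with hAdef
    set B : ℝ := 2 * (z₀ * (z.re - z₀)) with hBdef
    set G : ℝ := z₀ ^ 2 - 1 with hGdef
    set S : ℝ := Real.sqrt (B ^ 2 - 4 * A * G) with hSdef
    set TM : ℝ := (-B - S) / (2 * A) with hTMdef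
    set TP : ℝ := (-B + S) / (2 * A) with hTPdef
    obtain ⟨hform, htm0, htp1⟩ :=
      hilbertDist_formula (z₀ : ℂ) z A B G S TM TP hαpf hβpf hγpf hSdef hTMdef hTPdef
        habs hz1 hne
    have hα0 : 0 < A := by
      rw [hαpf]; exact Complex.normSq_pos.mpr (sub_ne_zero.mpr hne.symm)
    have hG0 : G < 0 := by rw [hGdef]; nlinarith
    have hD0 : 0 < B ^ 2 - 4 * A * G := by nlinarith [sq_nonneg B, mul_pos hα0 (neg_pos.mpr hG0)]
    have hss : S * S = B ^ 2 - 4 * A * G := by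
      rw [hSdef]; exact Real.mul_self_sqrt hD0.le
    have hCRpos : 0 < (1 - TM) * TP := mul_pos (by linarith) (by linarith)
    have hden : 0 < (-TM) * (TP - 1) := mul_pos (by linarith) (by linarith)
    rw [hform] at hd
    have hCReq : (1 - TM) * TP / ((-TM) * (TP - 1)) = r := by
      rw [hr, ← hd, Real.exp_log (div_pos hCRpos hden)]
    have e := (div_eq_iff hden.ne').mp hCReq
    rw [hTMdef, hTPdef] at e
    have hkey := alg1 A B G S r hα0 hss e
    rw [hBdef, hGdef] at hkey
    rw [hAdef, hBdef, hGdef] at hss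
    linear_combination (((1 + r) * S + (1 - r) * (2 * (z₀ * (z.re - z₀)) + 2 * (z₀ ^ 2 - 1)))
      * hkey - (1 + r) ^ 2 * hss) / 4
  · intro hP
    have hS4 : 4 * r * (1 - z₀ * z.re) ^ 2 =
        (1 + r) ^ 2 * (1 - z₀ ^ 2) * (1 - z.re ^ 2 - z.im ^ 2) := by
      linear_combination hP
    have hC : 0 < (1 + r) ^ 2 * (1 - z₀ ^ 2) := by positivity
    have hSpos : 0 < 1 - z.re ^ 2 - z.im ^ 2 := by
      rcases eq_or_ne (1 - z₀ * z.re) 0 with h0 | h0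
      · exfalso
        have h0' : z₀ * z.re = 1 := by linarith
        have hsq1 : z₀ ^ 2 * z.re ^ 2 = 1 := by linear_combination (z₀ * z.re + 1) * h0'
        have hx2 : 1 < z.re ^ 2 := by
          by_contra hcon
          push_neg at hcon
          nlinarith [mul_le_mul_of_nonneg_left hcon (sq_nonneg z₀)]
        have hgt : 0 < z.re ^ 2 + z.im ^ 2 - 1 := by nlinarith [sq_nonneg z.im]
        have h00 : (1 - z₀ * z.re) ^ 2 = 0 := by rw [h0]; ring
        nlinarith [mul_pos hC hgt]
      · have h00 : 0 < (1 - z₀ * z.re) ^ 2 := by positivity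
        by_contra hcon
        push_neg at hcon
        have := mul_nonpos_of_nonneg_of_nonpos hC.le hcon
        nlinarith [mul_pos (by linarith : (0:ℝ) < 4 * r) h00]
    have hz1 : ‖z‖ < 1 := by
      have h2' : ‖z‖ ^ 2 < 1 := by
        rw [Complex.sq_norm, Complex.normSq_apply]; nlinarith
      nlinarith [norm_nonneg z]
    have hne : (z₀ : ℂ) ≠ z := by
      intro h
      have hx : z.re = z₀ := by rw [← h, Complex.ofReal_re]
      have hy : z.im = 0 := by rw [← h, Complex.ofReal_im]
      rw [hx, hy] at hP
      have hpos : 0 < (r - 1) ^ 2 * ((1 - z₀ ^ 2) * (1 - z₀ ^ 2)) :=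
        mul_pos (by nlinarith : (0:ℝ) < (r - 1) ^ 2) (mul_pos h1z h1z)
      nlinarith [hP, hpos]
    refine ⟨hz1, ?_⟩
    set A : ℝ := (z.re - z₀) ^ 2 + z.im ^ 2 with hAdef
    set B : ℝ := 2 * (z₀ * (z.re - z₀)) with hBdef
    set G : ℝ := z₀ ^ 2 - 1 with hGdef
    set S : ℝ := Real.sqrt (B ^ 2 - 4 * A * G) with hSdef
    set TM : ℝ := (-B - S) / (2 * A) with hTMdef
    set TP : ℝ := (-B + S) / (2 * A) with hTPdef
    obtain ⟨hform, htm0, htp1⟩ :=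
      hilbertDist_formula (z₀ : ℂ) z A B G S TM TP hαpf hβpf hγpf hSdef hTMdef hTPdef
        habs hz1 hne
    have hα0 : 0 < A := by
      rw [hαpf]; exact Complex.normSq_pos.mpr (sub_ne_zero.mpr hne.symm)
    have hG0 : G < 0 := by rw [hGdef]; nlinarith
    have hD0 : 0 < B ^ 2 - 4 * A * G := by nlinarith [sq_nonneg B, mul_pos hα0 (neg_pos.mpr hG0)]
    have hss : S * S = B ^ 2 - 4 * A * G := by
      rw [hSdef]; exact Real.mul_self_sqrt hD0.le
    have hS0 : 0 ≤ S := hSdef ▸ Real.sqrt_nonneg _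
    have hx1 : z₀ * z.re < 1 := by nlinarith [sq_nonneg (z₀ - z.re), sq_nonneg z.im]
    have hssu : S * S = (2 * (z₀ * (z.re - z₀))) ^ 2 -
        4 * ((z.re - z₀) ^ 2 + z.im ^ 2) * (z₀ ^ 2 - 1) := by
      rw [hss, hAdef, hBdef, hGdef]
    have hsq : ((1 + r) * S) ^ 2 =
        ((1 - r) * (2 * (z₀ * (z.re - z₀)) + 2 * (z₀ ^ 2 - 1))) ^ 2 := by
      linear_combination (1 + r) ^ 2 * hssu + 4 * hP
    have hknn : 0 ≤ (1 - r) * (2 * (z₀ * (z.re - z₀)) + 2 * (z₀ ^ 2 - 1)) := by nlinarith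
    have hkey : (1 + r) * S = (1 - r) * (2 * (z₀ * (z.re - z₀)) + 2 * (z₀ ^ 2 - 1)) := by
      have h1 : (1 + r) * S = Real.sqrt (((1 + r) * S) ^ 2) :=
        (Real.sqrt_sq (by positivity)).symm
      rw [hsq, Real.sqrt_sq hknn] at h1
      exact h1
    have hkey' : (1 + r) * S = (1 - r) * (B + 2 * G) := by
      rw [hBdef, hGdef]; linear_combination hkey
    have e := alg2 A B G S r hα0 hss hkey'
    have hratio : (1 - TM) * TP = r * ((-TM) * (TP - 1)) := by
      rw [hTMdef, hTPdef]; exact e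
    have hden : 0 < (-TM) * (TP - 1) := mul_pos (by linarith) (by linarith)
    rw [hform, show (1 - TM) * TP / ((-TM) * (TP - 1)) = r from by
      rw [div_eq_iff hden.ne']; linear_combination hratio, hr, Real.log_exp]


/-- For a real center `z₀ ∈ (0,1)`, the Hilbert circle `∂B_h(z₀,t)` is exactly
the Euclidean ellipse
`(((r+1)²-(r-1)²z₀²)x - 4rz₀)²/((r²-1)²(1-z₀²)²) + ((r+1)²-(r-1)²z₀²)y²/((r-1)²(1-z₀²)) = 1`
(with `r = eᵗ`, `z = x+iy`); its semi-minor axis is `(r²-1)(1-z₀²)/((r+1)²-(r-1)²z₀²)`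
and its semi-major axis is `(r-1)√(1-z₀²)/√((r+1)²-(r-1)²z₀²)`. -/
theorem hilbert_circle_ellipse_real_center (z₀ : ℝ) (h₁ : 0 < z₀) (h₂ : z₀ < 1)
    (t : ℝ) (ht : 0 < t) (r : ℝ) (hr : r = Real.exp t) :
    ({z : ℂ | ‖z‖ < 1 ∧ hilbertDist (z₀ : ℂ) z = t} =
      {z : ℂ |
        (((r + 1) ^ 2 - (r - 1) ^ 2 * z₀ ^ 2) * z.re - 4 * r * z₀) ^ 2 /
            ((r ^ 2 - 1) ^ 2 * (1 - z₀ ^ 2) ^ 2) +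
          ((r + 1) ^ 2 - (r - 1) ^ 2 * z₀ ^ 2) * z.im ^ 2 /
            ((r - 1) ^ 2 * (1 - z₀ ^ 2)) = 1}) ∧
    ({z : ℂ | ‖z‖ < 1 ∧ hilbertDist (z₀ : ℂ) z = t} =
      {z : ℂ |
        ((z.re - 4 * r * z₀ / ((r + 1) ^ 2 - (r - 1) ^ 2 * z₀ ^ 2)) /
            ((r ^ 2 - 1) * (1 - z₀ ^ 2) / ((r + 1) ^ 2 - (r - 1) ^ 2 * z₀ ^ 2))) ^ 2 +
          (z.im /
            ((r - 1) * Real.sqrt (1 - z₀ ^ 2) /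
              Real.sqrt ((r + 1) ^ 2 - (r - 1) ^ 2 * z₀ ^ 2))) ^ 2 = 1}) ∧
    (r ^ 2 - 1) * (1 - z₀ ^ 2) / ((r + 1) ^ 2 - (r - 1) ^ 2 * z₀ ^ 2) ≤
      (r - 1) * Real.sqrt (1 - z₀ ^ 2) / Real.sqrt ((r + 1) ^ 2 - (r - 1) ^ 2 * z₀ ^ 2) := by
  have hr1 : 1 < r := by
    rw [hr, show (1:ℝ) = Real.exp 0 from Real.exp_zero.symm]
    exact Real.exp_lt_exp.mpr ht
  have h1z : 0 < 1 - z₀ ^ 2 := by nlinarith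
  have hA : 0 < (r + 1) ^ 2 - (r - 1) ^ 2 * z₀ ^ 2 := by
    nlinarith [mul_nonneg (sq_nonneg (r - 1)) h1z.le]
  have hr2 : 0 < r ^ 2 - 1 := by nlinarith
  have hmain := main_char z₀ h₁ h₂ t ht r hr
  refine ⟨?_, ?_, ?_⟩
  · rw [hmain]
    ext z
    simp only [Set.mem_setOf_eq]
    constructor
    · intro hP
      have hd1 : ((r ^ 2 - 1) ^ 2 * (1 - z₀ ^ 2) ^ 2) ≠ 0 := by positivity
      have hd2 : ((r - 1) ^ 2 * (1 - z₀ ^ 2)) ≠ 0 := by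
        have h3 : 0 < (r - 1) ^ 2 := by nlinarith
        positivity
      rw [div_add_div _ _ hd1 hd2, div_eq_one_iff_eq (mul_ne_zero hd1 hd2)]
      linear_combination ((r - 1) ^ 2 * (1 - z₀ ^ 2) * ((r + 1) ^ 2 - (r - 1) ^ 2 * z₀ ^ 2)) * hP
    · intro hE
      have hd1 : ((r ^ 2 - 1) ^ 2 * (1 - z₀ ^ 2) ^ 2) ≠ 0 := by positivity
      have hd2 : ((r - 1) ^ 2 * (1 - z₀ ^ 2)) ≠ 0 := by
        have : 0 < (r - 1) ^ 2 := by nlinarith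
        positivity
      rw [div_add_div _ _ hd1 hd2, div_eq_one_iff_eq (mul_ne_zero hd1 hd2)] at hE
      have hC : ((r - 1) ^ 2 * (1 - z₀ ^ 2) * ((r + 1) ^ 2 - (r - 1) ^ 2 * z₀ ^ 2)) ≠ 0 :=
        mul_ne_zero hd2 hA.ne'
      have h2 : ((r - 1) ^ 2 * (1 - z₀ ^ 2) * ((r + 1) ^ 2 - (r - 1) ^ 2 * z₀ ^ 2)) *
          ((1 + r) ^ 2 * ((z.re - z₀) ^ 2 + (1 - z₀ ^ 2) * z.im ^ 2)) =
          ((r - 1) ^ 2 * (1 - z₀ ^ 2) * ((r + 1) ^ 2 - (r - 1) ^ 2 * z₀ ^ 2)) *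
          ((r - 1) ^ 2 * (1 - z₀ * z.re) ^ 2) := by
        linear_combination hE
      exact mul_left_cancel₀ hC h2
  · rw [hmain]
    ext z
    simp only [Set.mem_setOf_eq]
    have hu0 : 0 < Real.sqrt (1 - z₀ ^ 2) := Real.sqrt_pos.mpr h1z
    have hv0 : 0 < Real.sqrt ((r + 1) ^ 2 - (r - 1) ^ 2 * z₀ ^ 2) := Real.sqrt_pos.mpr hA
    have hu2 : Real.sqrt (1 - z₀ ^ 2) ^ 2 = 1 - z₀ ^ 2 := Real.sq_sqrt h1z.le
    have hv2 : Real.sqrt ((r + 1) ^ 2 - (r - 1) ^ 2 * z₀ ^ 2) ^ 2 =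
        (r + 1) ^ 2 - (r - 1) ^ 2 * z₀ ^ 2 := Real.sq_sqrt hA.le
    have hc2 : ((r - 1) * Real.sqrt (1 - z₀ ^ 2) /
        Real.sqrt ((r + 1) ^ 2 - (r - 1) ^ 2 * z₀ ^ 2)) ^ 2 =
        (r - 1) ^ 2 * (1 - z₀ ^ 2) / ((r + 1) ^ 2 - (r - 1) ^ 2 * z₀ ^ 2) := by
      rw [div_pow, mul_pow, hu2, hv2]
    have hd2' : ((r - 1) ^ 2 * (1 - z₀ ^ 2)) ≠ 0 := by
      have h3 : 0 < (r - 1) ^ 2 := by nlinarith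
      positivity
    have hT1 : ((z.re - 4 * r * z₀ / ((r + 1) ^ 2 - (r - 1) ^ 2 * z₀ ^ 2)) /
        ((r ^ 2 - 1) * (1 - z₀ ^ 2) / ((r + 1) ^ 2 - (r - 1) ^ 2 * z₀ ^ 2))) ^ 2 =
        (((r + 1) ^ 2 - (r - 1) ^ 2 * z₀ ^ 2) * z.re - 4 * r * z₀) ^ 2 /
          ((r ^ 2 - 1) ^ 2 * (1 - z₀ ^ 2) ^ 2) := by
      rw [div_pow]
      have hB : (r ^ 2 - 1) * (1 - z₀ ^ 2) / ((r + 1) ^ 2 - (r - 1) ^ 2 * z₀ ^ 2) ≠ 0 := by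
        positivity
      rw [sub_div' hA.ne']
      field_simp
    have hT2 : (z.im / ((r - 1) * Real.sqrt (1 - z₀ ^ 2) /
        Real.sqrt ((r + 1) ^ 2 - (r - 1) ^ 2 * z₀ ^ 2))) ^ 2 =
        ((r + 1) ^ 2 - (r - 1) ^ 2 * z₀ ^ 2) * z.im ^ 2 / ((r - 1) ^ 2 * (1 - z₀ ^ 2)) := by
      rw [div_pow, hc2, div_div_eq_mul_div]
      ring
    rw [hT1, hT2]
    constructor
    · intro hP
      have hd1 : ((r ^ 2 - 1) ^ 2 * (1 - z₀ ^ 2) ^ 2) ≠ 0 := by positivity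
      rw [div_add_div _ _ hd1 hd2', div_eq_one_iff_eq (mul_ne_zero hd1 hd2')]
      linear_combination ((r - 1) ^ 2 * (1 - z₀ ^ 2) * ((r + 1) ^ 2 - (r - 1) ^ 2 * z₀ ^ 2)) * hP
    · intro hE
      have hd1 : ((r ^ 2 - 1) ^ 2 * (1 - z₀ ^ 2) ^ 2) ≠ 0 := by positivity
      rw [div_add_div _ _ hd1 hd2', div_eq_one_iff_eq (mul_ne_zero hd1 hd2')] at hE
      have hC : ((r - 1) ^ 2 * (1 - z₀ ^ 2) * ((r + 1) ^ 2 - (r - 1) ^ 2 * z₀ ^ 2)) ≠ 0 :=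
        mul_ne_zero hd2' hA.ne'
      have h2 : ((r - 1) ^ 2 * (1 - z₀ ^ 2) * ((r + 1) ^ 2 - (r - 1) ^ 2 * z₀ ^ 2)) *
          ((1 + r) ^ 2 * ((z.re - z₀) ^ 2 + (1 - z₀ ^ 2) * z.im ^ 2)) =
          ((r - 1) ^ 2 * (1 - z₀ ^ 2) * ((r + 1) ^ 2 - (r - 1) ^ 2 * z₀ ^ 2)) *
          ((r - 1) ^ 2 * (1 - z₀ * z.re) ^ 2) := by
        linear_combination hE
      exact mul_left_cancel₀ hC h2
  · have hu0 : 0 < Real.sqrt (1 - z₀ ^ 2) := Real.sqrt_pos.mpr h1z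
    have hv0 : 0 < Real.sqrt ((r + 1) ^ 2 - (r - 1) ^ 2 * z₀ ^ 2) := Real.sqrt_pos.mpr hA
    have hu2 : Real.sqrt (1 - z₀ ^ 2) ^ 2 = 1 - z₀ ^ 2 := Real.sq_sqrt h1z.le
    have hv2 : Real.sqrt ((r + 1) ^ 2 - (r - 1) ^ 2 * z₀ ^ 2) ^ 2 =
        (r + 1) ^ 2 - (r - 1) ^ 2 * z₀ ^ 2 := Real.sq_sqrt hA.le
    have hle1 : (r + 1) * Real.sqrt (1 - z₀ ^ 2) ≤
        Real.sqrt ((r + 1) ^ 2 - (r - 1) ^ 2 * z₀ ^ 2) := by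
      have hsq : ((r + 1) * Real.sqrt (1 - z₀ ^ 2)) ^ 2 ≤
          Real.sqrt ((r + 1) ^ 2 - (r - 1) ^ 2 * z₀ ^ 2) ^ 2 := by
        rw [mul_pow, hu2, hv2]
        nlinarith [mul_nonneg (by positivity : (0:ℝ) ≤ 4 * r) (sq_nonneg z₀)]
      have h1 := Real.sqrt_le_sqrt hsq
      rwa [Real.sqrt_sq (by positivity), Real.sqrt_sq hv0.le] at h1
    rw [div_le_div_iff₀ hA hv0]
    have hstep := mul_le_mul_of_nonneg_left hle1
      (mul_nonneg (mul_nonneg (by linarith : (0:ℝ) ≤ r - 1) hu0.le) hv0.le)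
    have egoal : (r - 1) * Real.sqrt (1 - z₀ ^ 2) * ((r + 1) ^ 2 - (r - 1) ^ 2 * z₀ ^ 2) =
        (r - 1) * Real.sqrt (1 - z₀ ^ 2) *
          Real.sqrt ((r + 1) ^ 2 - (r - 1) ^ 2 * z₀ ^ 2) ^ 2 := by rw [hv2]
    have egoal2 : (r ^ 2 - 1) * (1 - z₀ ^ 2) * Real.sqrt ((r + 1) ^ 2 - (r - 1) ^ 2 * z₀ ^ 2) =
        (r ^ 2 - 1) * Real.sqrt (1 - z₀ ^ 2) ^ 2 *
          Real.sqrt ((r + 1) ^ 2 - (r - 1) ^ 2 * z₀ ^ 2) := by rw [hu2]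
    nlinarith [hstep, egoal, egoal2]
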